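/- Let ψ, φ be unit vectors in ℂ² and let a, b be real numbers. Then the largest eigenvalue of the Hermitian 2×2 matrix a·|ψ⟩⟨ψ| + b·|φ⟩⟨φ| equals (a+b)/2 + (1/2)·√((a−b)² + 4ab·|⟨ψ,φ⟩|²), where |ψ⟩⟨ψ| denotes the orthogonal projection onto the span of ψ and ⟨ψ,φ⟩ the Hermitian inner product. Equivalently, the maximum of tr(ρ(a|ψ⟩⟨ψ| + b|φ⟩⟨φ|)) over all qubit states ρ equals this quantity. -/

import Mathlib

open Matrix
open scoped ComplexOrder

noncomputable section

abbrev Mat2 := Matrix (Fin 2) (Fin 2) ℂ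

/-- The rank-one projection (outer product) `|v⟩⟨v|`. -/
def proj (v : Fin 2 → ℂ) : Mat2 := vecMulVec v (star v)

section auxGeneral
variable {M : Mat2} (hM : M.IsHermitian)

lemma aux_trace_mul_eq (ρ : Mat2) :
    (ρ * M).trace
      = ∑ i, (star (hM.eigenvectorUnitary : Mat2) * ρ * (hM.eigenvectorUnitary : Mat2)) i i
          * (hM.eigenvalues i : ℂ) := by
  set U := (hM.eigenvectorUnitary : Mat2) with hUdef
  have h1 : ρ * M = ρ * U * diagonal (Complex.ofReal ∘ hM.eigenvalues) * star U := by
    conv_lhs => rw [hM.spectral_theorem]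
    simp [mul_assoc, hUdef]
  rw [h1, trace_mul_comm, ← mul_assoc, ← mul_assoc]
  simp [Matrix.trace, Matrix.diag, Matrix.mul_diagonal, Function.comp]

lemma aux_trace_eq_sum : M.trace = ∑ i, (hM.eigenvalues i : ℂ) := by
  set U := (hM.eigenvectorUnitary : Mat2)
  have hU : star U * U = 1 := Matrix.mem_unitaryGroup_iff'.mp hM.eigenvectorUnitary.2
  conv_lhs => rw [hM.spectral_theorem, Unitary.conjStarAlgAut_apply]
  rw [trace_mul_cycle, hU, one_mul]
  simp [Matrix.trace, Matrix.diag, Function.comp]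

lemma aux_diag_nonneg {σ : Mat2} (hσ : σ.PosSemidef) (i : Fin 2) : 0 ≤ σ i i := by
  have := (posSemidef_iff_dotProduct_mulVec.mp hσ).2 (Pi.single i 1)
  simpa [dotProduct, mulVec, Pi.single_apply, Finset.sum_ite_eq] using this

lemma aux_le (ρ : Mat2) (hρ : ρ.PosSemidef) (hρ1 : ρ.trace = 1) :
    ((ρ * M).trace).re ≤ ⨆ i, hM.eigenvalues i := by
  set U := (hM.eigenvectorUnitary : Mat2) with hUdef
  have hU1 : U * star U = 1 := Matrix.mem_unitaryGroup_iff.mp hM.eigenvectorUnitary.2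
  set σ : Mat2 := star U * ρ * U with hσdef
  have hσ : σ.PosSemidef := by
    simpa [hσdef, Matrix.star_eq_conjTranspose] using hρ.conjTranspose_mul_mul_same U
  have hσtr : σ.trace = 1 := by
    rw [hσdef, trace_mul_cycle, hU1, one_mul, hρ1]
  have hdiag : ∀ i, 0 ≤ (σ i i).re ∧ (σ i i).im = 0 := by
    intro i
    have h := aux_diag_nonneg hσ i
    rw [Complex.le_def] at h
    simpa using ⟨h.1, h.2.symm⟩
  have hsum1 : ∑ i, (σ i i).re = 1 := by
    have : σ.trace.re = 1 := by rw [hσtr]; simp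
    simpa [Matrix.trace, Matrix.diag, Complex.re_sum] using this
  have hle : ∀ i, hM.eigenvalues i ≤ ⨆ j, hM.eigenvalues j := fun i =>
    le_ciSup (Set.Finite.bddAbove (Set.finite_range _)) i
  calc ((ρ * M).trace).re = ∑ i, (σ i i).re * hM.eigenvalues i := by
        rw [aux_trace_mul_eq hM ρ, Complex.re_sum]
        refine Finset.sum_congr rfl fun i _ => ?_
        rw [Complex.mul_re, Complex.ofReal_re, Complex.ofReal_im, (hdiag i).2]
        ring
    _ ≤ ∑ i : Fin 2, (σ i i).re * (⨆ j, hM.eigenvalues j) := by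
        refine Finset.sum_le_sum fun i _ => ?_
        exact mul_le_mul_of_nonneg_left (hle i) (hdiag i).1
    _ = ⨆ j, hM.eigenvalues j := by rw [← Finset.sum_mul, hsum1, one_mul]

lemma aux_exists (k : Fin 2) :
    ∃ ρ : Mat2, ρ.PosSemidef ∧ ρ.trace = 1 ∧ ((ρ * M).trace).re = hM.eigenvalues k := by
  set U := (hM.eigenvectorUnitary : Mat2) with hUdef
  have hU1 : U * star U = 1 := Matrix.mem_unitaryGroup_iff.mp hM.eigenvectorUnitary.2
  have hU2 : star U * U = 1 := Matrix.mem_unitaryGroup_iff'.mp hM.eigenvectorUnitary.2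
  set Dk : Mat2 := diagonal (Pi.single k 1) with hDkdef
  refine ⟨U * Dk * star U, ?_, ?_, ?_⟩
  · have hd : Dk.PosSemidef := by
      refine Matrix.PosSemidef.diagonal fun i => ?_
      by_cases h : i = k <;> simp [Pi.single_apply, h]
    simpa [Matrix.star_eq_conjTranspose] using hd.mul_mul_conjTranspose_same U
  · rw [trace_mul_cycle, hU2, one_mul, hDkdef]
    simp [Matrix.trace_diagonal, Pi.single_apply, Finset.sum_ite_eq]
  · rw [aux_trace_mul_eq hM]
    have hσ : star U * (U * Dk * star U) * U = Dk := by
      have : star U * (U * Dk * star U) * U = (star U * U) * Dk * (star U * U) := by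
        noncomm_ring
      rw [this, hU2, one_mul, mul_one]
    rw [hσ, hDkdef]
    simp [Matrix.diagonal_apply_eq, Pi.single_apply, ite_mul, Finset.sum_ite_eq]

end auxGeneral

/-- The operator-norm formula (Eq. (A6) of the paper): for unit vectors `ψ, φ ∈ ℂ²` and
reals `a, b`, the largest eigenvalue of the Hermitian matrix `a|ψ⟩⟨ψ| + b|φ⟩⟨φ|` equals
`(a+b)/2 + √((a−b)² + 4ab|⟨ψ,φ⟩|²)/2`; equivalently, this quantity is the maximum of
`tr(ρ(a|ψ⟩⟨ψ| + b|φ⟩⟨φ|))` over all qubit states `ρ`. -/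
theorem largest_eigenvalue_rank_one_combination
    (ψ φ : Fin 2 → ℂ)
    (hψ : ∑ i, Complex.normSq (ψ i) = 1) (hφ : ∑ i, Complex.normSq (φ i) = 1)
    (a b : ℝ)
    (hM : ((a : ℂ) • proj ψ + (b : ℂ) • proj φ).IsHermitian) :
    (⨆ i, hM.eigenvalues i)
      = (a + b) / 2
        + Real.sqrt ((a - b) ^ 2 + 4 * a * b * Complex.normSq (star ψ ⬝ᵥ φ)) / 2 ∧
    IsGreatest
      {r : ℝ | ∃ ρ : Mat2, ρ.PosSemidef ∧ ρ.trace = 1 ∧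
        ((ρ * ((a : ℂ) • proj ψ + (b : ℂ) • proj φ)).trace).re = r}
      ((a + b) / 2
        + Real.sqrt ((a - b) ^ 2 + 4 * a * b * Complex.normSq (star ψ ⬝ᵥ φ)) / 2) := by
  set M : Mat2 := (a : ℂ) • proj ψ + (b : ℂ) • proj φ with hMdef
  set s : ℝ := Complex.normSq (star ψ ⬝ᵥ φ) with hsdef
  set e : Fin 2 → ℝ := hM.eigenvalues with hedef
  -- trace of M
  have htr : M.trace = ((a + b : ℝ) : ℂ) := by
    have h1 : (proj ψ).trace = 1 := by
      simp only [proj, Matrix.trace, Matrix.diag, vecMulVec_apply, Pi.star_apply,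
        RCLike.star_def, Complex.mul_conj]
      rw [← Complex.ofReal_sum]
      norm_cast
    have h2 : (proj φ).trace = 1 := by
      simp only [proj, Matrix.trace, Matrix.diag, vecMulVec_apply, Pi.star_apply,
        RCLike.star_def, Complex.mul_conj]
      rw [← Complex.ofReal_sum]
      norm_cast
    rw [hMdef, Matrix.trace_add, Matrix.trace_smul, Matrix.trace_smul, h1, h2]
    simp only [smul_eq_mul, mul_one]
    push_cast
    ring
  -- determinant of M
  have hdet : M.det = ((a * b * (1 - s) : ℝ) : ℂ) := by
    have key : Complex.normSq (ψ 0 * φ 1 - ψ 1 * φ 0) + Complex.normSq (star ψ ⬝ᵥ φ)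
        = (∑ i, Complex.normSq (ψ i)) * (∑ i, Complex.normSq (φ i)) := by
      simp only [dotProduct, Fin.sum_univ_two, Pi.star_apply, RCLike.star_def,
        Complex.normSq_apply, Complex.mul_re, Complex.mul_im, Complex.sub_re, Complex.sub_im,
        Complex.add_re, Complex.add_im, Complex.conj_re, Complex.conj_im]
      ring
    rw [hψ, hφ, one_mul] at key
    have hdet' : M.det
        = (a : ℂ) * b * ((ψ 0 * φ 1 - ψ 1 * φ 0) * (starRingEnd ℂ) (ψ 0 * φ 1 - ψ 1 * φ 0)) := by
      simp only [hMdef, Matrix.det_fin_two, Matrix.add_apply, Matrix.smul_apply, proj,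
        vecMulVec_apply, Pi.star_apply, RCLike.star_def, smul_eq_mul, map_sub, _root_.map_mul]
      ring
    have hw : Complex.normSq (ψ 0 * φ 1 - ψ 1 * φ 0) = 1 - s := by
      rw [hsdef]; linarith [key]
    rw [hdet', Complex.mul_conj, hw]
    push_cast
    ring
  -- eigenvalue sum and product
  have hsum : e 0 + e 1 = a + b := by
    have := aux_trace_eq_sum hM
    rw [htr, Fin.sum_univ_two] at this
    exact_mod_cast this.symm
  have hprod : e 0 * e 1 = a * b * (1 - s) := by
    show hM.eigenvalues 0 * hM.eigenvalues 1 = a * b * (1 - s)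
    have := hM.det_eq_prod_eigenvalues
    rw [hdet, Fin.prod_univ_two] at this
    have h := congrArg Complex.re this.symm
    simpa using h
  -- the discriminant is a perfect square
  have hsq : (a - b) ^ 2 + 4 * a * b * s = (e 0 - e 1) ^ 2 := by linear_combination (-(e 0) - e 1 - a - b) * hsum + 4 * hprod
  -- iSup is the max
  have hS : (⨆ i, e i) = max (e 0) (e 1) := by
    apply le_antisymm
    · exact ciSup_le fun i => by fin_cases i <;> simp [le_max_left, le_max_right]
    · exact max_le (le_ciSup (Set.Finite.bddAbove (Set.finite_range _)) 0)
        (le_ciSup (Set.Finite.bddAbove (Set.finite_range _)) 1)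
  have hformula : (⨆ i, e i)
      = (a + b) / 2 + Real.sqrt ((a - b) ^ 2 + 4 * a * b * s) / 2 := by
    rw [hS, hsq, Real.sqrt_sq_eq_abs, ← hsum]
    rcases le_total (e 0) (e 1) with h | h
    · rw [max_eq_right h, abs_of_nonpos (by linarith), neg_sub]
      ring
    · rw [max_eq_left h, abs_of_nonneg (by linarith)]
      ring
  refine ⟨hformula, ?_, ?_⟩
  · -- membership
    obtain ⟨k, hk⟩ : ∃ k, e k = max (e 0) (e 1) := by
      rcases le_total (e 0) (e 1) with h | h
      exacts [⟨1, (max_eq_right h).symm⟩, ⟨0, (max_eq_left h).symm⟩]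
    obtain ⟨ρ, h1, h2, h3⟩ := aux_exists hM k
    exact ⟨ρ, h1, h2, by rw [← hformula, hS, ← hk]; exact h3⟩
  · -- upper bound
    rintro r ⟨ρ, h1, h2, h3⟩
    rw [← h3, ← hformula]
    exact aux_le hM ρ h1 h2
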